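/- Let P^{(γ,δ)}_ν(t) = (1/ν!) Σ_{k=0}^ν (1/(2^k k!)) (−ν)_k (γ+δ+ν+1)_k (γ+k+1)_{ν−k} (1−t)^k be the Jacobi polynomial, where (x)_k is the Pochhammer symbol. If γ + 1 > 0 and γ + δ + 2ν < 0, then P^{(γ,δ)}_ν(0) > 0. -/

import Mathlib

/-- The Pochhammer symbol `(x)_k = x(x+1)⋯(x+k−1)`. -/
noncomputable def poch (x : ℝ) (k : ℕ) : ℝ := ∏ j ∈ Finset.range k, (x + j)

/-- The Jacobi polynomial
`P^{(γ,δ)}_ν(t) = (1/ν!) Σ_{k=0}^ν (1/(2^k k!)) (−ν)_k (γ+δ+ν+1)_k (γ+k+1)_{ν−k} (1−t)^k`. -/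
noncomputable def jacobiP (γ δ : ℝ) (ν : ℕ) (t : ℝ) : ℝ :=
  (1 / (Nat.factorial ν : ℝ)) * ∑ k ∈ Finset.range (ν + 1),
    (1 / (2 ^ k * (Nat.factorial k : ℝ))) * poch (-(ν : ℝ)) k
      * poch (γ + δ + ν + 1) k * poch (γ + k + 1) (ν - k) * (1 - t) ^ k

/-- If `γ + 1 > 0` and `γ + δ + 2ν < 0` then `P^{(γ,δ)}_ν(0) > 0`. -/
theorem jacobiP_pos_at_zero (γ δ : ℝ) (ν : ℕ) (hγ : 0 < γ + 1)
    (hν : γ + δ + 2 * ν < 0) :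
    0 < jacobiP γ δ ν 0 := by
  unfold jacobiP
  apply mul_pos
  · positivity
  · apply Finset.sum_pos
    · intro k hk
      have hkν : k ≤ ν := Nat.lt_succ_iff.mp (Finset.mem_range.mp hk)
      have h1 : (0:ℝ) < 1 / (2 ^ k * (Nat.factorial k : ℝ)) := by positivity
      have h2 : 0 < poch (-(ν : ℝ)) k * poch (γ + δ + ν + 1) k := by
        unfold poch
        rw [← Finset.prod_mul_distrib]
        apply Finset.prod_pos
        intro j hj
        have hjk : j < k := Finset.mem_range.mp hj
        apply mul_pos_of_neg_of_neg
        · have : (j:ℝ) < ν := by exact_mod_cast lt_of_lt_of_le hjk hkν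
          linarith
        · have : (j:ℝ) ≤ ν - 1 := by
            have : (j:ℝ) + 1 ≤ ν := by exact_mod_cast lt_of_lt_of_le hjk hkν
            linarith
          linarith
      have h3 : 0 < poch (γ + k + 1) (ν - k) := by
        unfold poch
        apply Finset.prod_pos
        intro j hj
        have : (0:ℝ) ≤ (k:ℝ) + j := by positivity
        linarith
      have h4 : (0:ℝ) < (1 - 0) ^ k := by norm_num
      calc (0:ℝ) < (1 / (2 ^ k * (Nat.factorial k : ℝ)) *
            (poch (-(ν : ℝ)) k * poch (γ + δ + ν + 1) k)) *
            poch (γ + k + 1) (ν - k) * (1 - 0) ^ k := by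
              apply mul_pos (mul_pos (mul_pos h1 h2) h3) h4
        _ = 1 / (2 ^ k * (Nat.factorial k : ℝ)) * poch (-(ν : ℝ)) k
              * poch (γ + δ + ν + 1) k * poch (γ + k + 1) (ν - k) * (1 - 0) ^ k := by ring
    · exact Finset.nonempty_range_add_one
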